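/- Let q_1, ..., q_r be nonzero integers with the property (*): whenever e_0, e_1, ..., e_r are nonnegative integers such that (−3)^{e_0} q_1^{e_1}⋯q_r^{e_r} is a perfect square, the sum e_0 + e_1 + ⋯ + e_r is even. Then there exist infinitely many primes p with (−3/p) = (q_1/p) = ⋯ = (q_r/p) = −1. -/

import Mathlib

namespace Stmt3Aux

/-- `(-1)^x` for `x : ZMod 2`. -/
def sgn (x : ZMod 2) : ℤ := (-1) ^ x.val

lemma sgn_add (x y : ZMod 2) : sgn (x + y) = sgn x * sgn y := by revert x y; decide
@[simp] lemma sgn_zero : sgn 0 = 1 := rfl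
@[simp] lemma sgn_one : sgn 1 = -1 := rfl
lemma sgn_cases (x : ZMod 2) : sgn x = 1 ∨ sgn x = -1 := by revert x; decide
lemma sgn_nsmul (k : ℕ) (x : ZMod 2) : sgn (k • x) = sgn x ^ k := by
  induction k with
  | zero => simp
  | succ n ih => rw [succ_nsmul, sgn_add, ih, pow_succ]

lemma sgn_sum {ι : Type*} (s : Finset ι) (f : ι → ZMod 2) :
    sgn (∑ i ∈ s, f i) = ∏ i ∈ s, sgn (f i) := by
  induction s using Finset.cons_induction with
  | empty => simp
  | cons a s ha ih => rw [Finset.sum_cons, Finset.prod_cons, sgn_add, ih]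

/-- The F₂-vector space recording sign and exponents mod 2. -/
abbrev V : Type := ZMod 2 × (ℕ →₀ ZMod 2)

/-- The class of a nonzero integer in `ℚ^*/(ℚ^*)²`, encoded in `V`. -/
noncomputable def vf (n : ℤ) : V :=
  (if n < 0 then 1 else 0, (n.natAbs.factorization).mapRange (Nat.cast) (by simp))

lemma vf_mul {m n : ℤ} (hm : m ≠ 0) (hn : n ≠ 0) : vf (m * n) = vf m + vf n := by
  have hfac : (m * n).natAbs.factorization
      = m.natAbs.factorization + n.natAbs.factorization := by
    rw [Int.natAbs_mul, Nat.factorization_mul (by simpa using hm) (by simpa using hn)]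
  unfold vf
  rw [hfac]
  ext ℓ <;>
    simp only [Prod.fst_add, Prod.snd_add, Finsupp.add_apply, Finsupp.mapRange_apply,
      Nat.cast_add]
  by_cases h : m < 0 <;> by_cases h' : n < 0
  · have hmn : ¬ m * n < 0 := not_lt.2 (le_of_lt (mul_pos_of_neg_of_neg h h'))
    rw [if_neg hmn, if_pos h, if_pos h']; decide
  · have h'' : 0 < n := (not_lt.1 h').lt_of_ne' hn
    have hmn : m * n < 0 := mul_neg_of_neg_of_pos h h''
    rw [if_pos hmn, if_pos h, if_neg h']; decide
  · have h'' : 0 < m := (not_lt.1 h).lt_of_ne' hm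
    have hmn : m * n < 0 := mul_neg_of_pos_of_neg h'' h'
    rw [if_pos hmn, if_neg h, if_pos h']; decide
  · have hm'' : 0 < m := (not_lt.1 h).lt_of_ne' hm
    have hn'' : 0 < n := (not_lt.1 h').lt_of_ne' hn
    have hmn : ¬ m * n < 0 := not_lt.2 (le_of_lt (mul_pos hm'' hn''))
    rw [if_neg hmn, if_neg h, if_neg h']; decide

lemma vf_pow {m : ℤ} (hm : m ≠ 0) (k : ℕ) : vf (m ^ k) = k • vf m := by
  induction k with
  | zero => simp [vf]
  | succ n ih => rw [pow_succ, vf_mul (pow_ne_zero _ hm) hm, ih, succ_nsmul]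

lemma vf_prod {ι : Type*} (s : Finset ι) (m : ι → ℤ) (hm : ∀ i ∈ s, m i ≠ 0) :
    vf (∏ i ∈ s, m i) = ∑ i ∈ s, vf (m i) := by
  induction s using Finset.cons_induction with
  | empty => simp [vf]
  | cons a s ha ih =>
      rw [Finset.prod_cons, Finset.sum_cons,
        vf_mul (hm a (Finset.mem_cons_self a s))
          (Finset.prod_ne_zero_iff.2 fun i hi => hm i (Finset.mem_cons_of_mem hi)),
        ih fun i hi => hm i (Finset.mem_cons_of_mem hi)]

lemma isSquare_of_vf_eq_zero {m : ℤ} (hm : m ≠ 0) (h : vf m = 0) : IsSquare m := by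
  have h1 : ¬ m < 0 := by
    intro hneg
    have := congrArg Prod.fst h
    simp [vf, hneg] at this
  have h2 : ∀ ℓ, Even (m.natAbs.factorization ℓ) := by
    intro ℓ
    have := congrArg (fun v : V => v.2 ℓ) h
    simp only [vf, Finsupp.mapRange_apply, Prod.snd_zero, Finsupp.coe_zero, Pi.zero_apply] at this
    rwa [ZMod.natCast_eq_zero_iff, ← even_iff_two_dvd] at this
  have hn : m.natAbs ≠ 0 := by simpa using hm
  have hself : ∏ p ∈ m.natAbs.factorization.support, p ^ m.natAbs.factorization p
      = m.natAbs := Nat.factorization_prod_pow_eq_self hn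
  have hsq : IsSquare m.natAbs := by
    refine ⟨∏ p ∈ m.natAbs.factorization.support, p ^ (m.natAbs.factorization p / 2), ?_⟩
    conv_lhs => rw [← hself]
    rw [← Finset.prod_mul_distrib]
    refine Finset.prod_congr rfl fun p _ => ?_
    rw [← pow_add]
    congr 1
    obtain ⟨c, hc⟩ := h2 p
    omega
  obtain ⟨s, hs⟩ := hsq
  refine ⟨(s : ℤ), ?_⟩
  have hm' : m = (m.natAbs : ℤ) := by omega
  rw [hm', hs]; push_cast; ring

/-- decomposition of `(0, mapRange cast f)` as a sum of basis vectors. -/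
lemma snd_decomp (f : ℕ →₀ ℕ) :
    ((0 : ZMod 2), f.mapRange (Nat.cast) (by simp)) =
      ∑ ℓ ∈ f.support, (f ℓ) • ((0 : ZMod 2), Finsupp.single ℓ (1 : ZMod 2)) := by
  ext j
  · simp [Prod.fst_sum]
  · simp only [Prod.snd_sum, Prod.smul_snd, Finsupp.mapRange_apply]
    rw [Finsupp.finset_sum_apply]
    rw [Finset.sum_eq_single j]
    · by_cases hj : j ∈ f.support
      · simp [Finsupp.single_apply, Nat.cast_smul_eq_nsmul]
      · have : f j = 0 := Finsupp.notMem_support_iff.1 hj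
        simp [this, Finsupp.single_apply]
    · intro b _ hbj
      simp [Finsupp.single_apply, hbj]
    · intro hj
      have : f j = 0 := Finsupp.notMem_support_iff.1 hj
      simp [this]

/-- Main evaluation: the legendre symbol of `m` matches `sgn ∘ L ∘ vf`. -/
lemma eval_legendre (p : ℕ) [Fact p.Prime] (L : V →ₗ[ZMod 2] ZMod 2) (P : Finset ℕ)
    (h1 : legendreSym p (-1) = sgn (L (1, 0)))
    (h2 : legendreSym p 2 = sgn (L (0, Finsupp.single 2 1)))
    (hl : ∀ ℓ ∈ P, legendreSym p (ℓ : ℤ) = sgn (L (0, Finsupp.single ℓ 1)))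
    (m : ℤ) (hm : m ≠ 0) (hfac : ∀ ℓ ∈ m.natAbs.primeFactors, ℓ = 2 ∨ ℓ ∈ P) :
    legendreSym p m = sgn (L (vf m)) := by
  have hn : m.natAbs ≠ 0 := by simpa using hm
  have key : ∀ ℓ ∈ m.natAbs.factorization.support,
      legendreSym p (ℓ : ℤ) = sgn (L (0, Finsupp.single ℓ 1)) := by
    intro ℓ hℓ
    rw [Nat.support_factorization] at hℓ
    rcases hfac ℓ hℓ with h | h
    · subst h; exact_mod_cast h2
    · exact hl ℓ h
  have habs : legendreSym p (m.natAbs : ℤ)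
      = sgn (L (0, (m.natAbs.factorization).mapRange (Nat.cast) (by simp))) := by
    rw [snd_decomp, map_sum, sgn_sum]
    have hself : ∏ ℓ ∈ m.natAbs.factorization.support, ℓ ^ m.natAbs.factorization ℓ
        = m.natAbs := Nat.factorization_prod_pow_eq_self hn
    conv_lhs => rw [← hself]
    have : legendreSym p ((∏ ℓ ∈ m.natAbs.factorization.support,
        ℓ ^ m.natAbs.factorization ℓ : ℕ) : ℤ)
        = ∏ ℓ ∈ m.natAbs.factorization.support,
            (legendreSym p (ℓ : ℤ)) ^ m.natAbs.factorization ℓ := by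
      show quadraticChar (ZMod p) _ = _
      push_cast
      rw [map_prod]
      refine Finset.prod_congr rfl fun ℓ _ => ?_
      rw [map_pow]
      show (quadraticChar (ZMod p)) ((ℓ : ZMod p)) ^ _
        = (quadraticChar (ZMod p)) (((ℓ : ℤ) : ZMod p)) ^ _
      norm_cast
    rw [this]
    refine Finset.prod_congr rfl fun ℓ hℓ => ?_
    rw [key ℓ hℓ, map_nsmul, sgn_nsmul]
  by_cases hneg : m < 0
  · have hm' : m = -1 * (m.natAbs : ℤ) := by omega
    have hv : vf m = (1, 0) + (0, (m.natAbs.factorization).mapRange (Nat.cast) (by simp)) := by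
      unfold vf
      rw [if_pos hneg]
      ext <;> simp
    rw [hv, map_add, sgn_add, ← h1, ← habs]
    conv_lhs => rw [hm']
    exact legendreSym.mul p _ _
  · have hm' : m = (m.natAbs : ℤ) := by omega
    have hv : vf m = (0, (m.natAbs.factorization).mapRange (Nat.cast) (by simp)) := by
      unfold vf
      rw [if_neg hneg]
    rw [hv, ← habs]
    conv_lhs => rw [hm']

lemma crt (a₈ : ℕ) (P : Finset ℕ) (hP : ∀ ℓ ∈ P, ℓ.Prime ∧ ℓ ≠ 2) (b : ℕ → ℕ) :
    ∃ a : ℕ, a ≡ a₈ [MOD 8] ∧ ∀ ℓ ∈ P, a ≡ b ℓ [MOD ℓ] := by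
  classical
  induction P using Finset.induction with
  | empty => exact ⟨a₈, Nat.ModEq.refl _, by simp⟩
  | @insert ℓ s hℓs ih =>
    obtain ⟨a, ha8, has⟩ := ih (fun x hx => hP x (Finset.mem_insert_of_mem hx))
    have hℓ := hP ℓ (Finset.mem_insert_self ℓ s)
    set N : ℕ := 8 * ∏ x ∈ s, x with hN
    have hco : N.Coprime ℓ := by
      rw [Nat.coprime_comm, hℓ.1.coprime_iff_not_dvd]
      intro hdvd
      rcases (Nat.Prime.dvd_mul hℓ.1).1 hdvd with h | h
      · have h8 : ℓ ∣ 2^3 := by norm_num at h ⊢; exact h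
        have := Nat.Prime.dvd_of_dvd_pow (m := 2) hℓ.1 h8
        have := (Nat.prime_dvd_prime_iff_eq hℓ.1 Nat.prime_two).1 this
        exact hℓ.2 this
      · obtain ⟨x, hx, hdx⟩ := hℓ.1.prime.exists_mem_finset_dvd h
        have hex : ℓ = x := ((hP x (Finset.mem_insert_of_mem hx)).1.eq_one_or_self_of_dvd ℓ hdx).resolve_left hℓ.1.ne_one
        exact hℓs (hex ▸ hx)
    obtain ⟨a', ha'⟩ := Nat.chineseRemainder hco a (b ℓ)
    have hmodN : a' ≡ a [MOD N] := ha'.1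
    refine ⟨a', ?_, ?_⟩
    · exact (hmodN.of_dvd ⟨∏ x ∈ s, x, rfl⟩).trans ha8
    · intro x hx
      rcases Finset.mem_insert.1 hx with rfl | hx
      · exact ha'.2
      · have hdvd : x ∣ N := Dvd.dvd.mul_left (Finset.dvd_prod_of_mem _ hx) 8
        exact (hmodN.of_dvd hdvd).trans (has x hx)

end Stmt3Aux

/-- Condition (*) for nonzero integers `q 0, ..., q (r-1)`: whenever `e₀, e₁, ..., e_r` are
nonnegative integers such that `(-3)^e₀ * q₁^e₁ ⋯ q_r^e_r` is a perfect square, the sum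
`e₀ + e₁ + ⋯ + e_r` is even. -/
def StarCondition {r : ℕ} (q : Fin r → ℤ) : Prop :=
  ∀ (e₀ : ℕ) (e : Fin r → ℕ),
    IsSquare ((-3 : ℤ) ^ e₀ * ∏ i, (q i) ^ (e i)) → Even (e₀ + ∑ i, e i)

open Stmt3Aux

theorem stmt3 {r : ℕ} (q : Fin r → ℤ) (hq : ∀ i, q i ≠ 0)
    (hstar : StarCondition q) :
    ∀ N : ℕ, ∃ p : ℕ, N < p ∧ ∃ _ : Fact p.Prime,
      legendreSym p (-3) = -1 ∧ ∀ i, legendreSym p (q i) = -1 := by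
  classical
  intro N
  -- the integers `-3, q 0, ..., q (r-1)`
  set n : Fin (r + 1) → ℤ := Fin.cons (-3) q with hn
  have hn0 : ∀ i, n i ≠ 0 := by
    refine Fin.cases ?_ ?_
    · simp [hn]
    · intro j; simpa [hn] using hq j
  -- linear-algebra setup
  set T : (Fin (r + 1) → ZMod 2) →ₗ[ZMod 2] V :=
    ∑ i, LinearMap.smulRight (LinearMap.proj i) (vf (n i)) with hTdef
  set σ : (Fin (r + 1) → ZMod 2) →ₗ[ZMod 2] ZMod 2 := ∑ i, LinearMap.proj i with hσdef
  have hT : ∀ c, T c = ∑ i, c i • vf (n i) := by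
    intro c; simp [hTdef]
  have hσ : ∀ c, σ c = ∑ i, c i := by
    intro c; simp [hσdef]
  have hker : LinearMap.ker T ≤ LinearMap.ker σ := by
    intro c hc
    rw [LinearMap.mem_ker] at hc ⊢
    rw [hT] at hc
    rw [hσ]
    set e : Fin (r + 1) → ℕ := fun i => (c i).val with he
    have hcast : ∀ i, ((e i : ℕ) : ZMod 2) = c i := fun i => ZMod.natCast_rightInverse (c i)
    have hveq : vf ((-3 : ℤ) ^ e 0 * ∏ j, (q j) ^ (e j.succ)) = 0 := by
      have hprod : (-3 : ℤ) ^ e 0 * ∏ j, (q j) ^ (e j.succ) = ∏ i, (n i) ^ (e i) := by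
        rw [Fin.prod_univ_succ]
        simp [hn]
      rw [hprod, vf_prod _ _ (fun i _ => pow_ne_zero _ (hn0 i))]
      calc ∑ i, vf ((n i) ^ (e i)) = ∑ i, (e i) • vf (n i) := by
            exact Finset.sum_congr rfl fun i _ => vf_pow (hn0 i) (e i)
        _ = ∑ i, c i • vf (n i) := by
            refine Finset.sum_congr rfl fun i _ => ?_
            rw [← hcast i, Nat.cast_smul_eq_nsmul]
        _ = 0 := hc
    have hsq : IsSquare ((-3 : ℤ) ^ e 0 * ∏ j, (q j) ^ (e j.succ)) := by
      refine isSquare_of_vf_eq_zero ?_ hveq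
      exact mul_ne_zero (pow_ne_zero _ (by norm_num))
        (Finset.prod_ne_zero_iff.2 fun j _ => pow_ne_zero _ (hq j))
    have heven := hstar (e 0) (fun (j : Fin r) => e j.succ) hsq
    have hsum : e 0 + ∑ j : Fin r, e j.succ = ∑ i, e i := (Fin.sum_univ_succ e).symm
    rw [hsum] at heven
    have : ((∑ i, e i : ℕ) : ZMod 2) = 0 := by
      rw [ZMod.natCast_eq_zero_iff]
      exact even_iff_two_dvd.1 heven
    calc ∑ i, c i = ∑ i, ((e i : ℕ) : ZMod 2) := by
          exact Finset.sum_congr rfl fun i _ => (hcast i).symm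
      _ = ((∑ i, e i : ℕ) : ZMod 2) := by push_cast; rfl
      _ = 0 := this
  -- obtain the linear functional L with L (vf (n i)) = 1
  obtain ⟨L, hL⟩ := LinearMap.exists_extend
    (((LinearMap.ker T).liftQ σ hker) ∘ₗ (T.quotKerEquivRange.symm :
      LinearMap.range T →ₗ[ZMod 2] ((Fin (r + 1) → ZMod 2) ⧸ LinearMap.ker T)))
  have hLT : ∀ x, L (T x) = σ x := by
    intro x
    have h1 : T.quotKerEquivRange (Submodule.Quotient.mk x)
        = ⟨T x, LinearMap.mem_range_self T x⟩ :=
      Subtype.ext (T.quotKerEquivRange_apply_mk x)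
    have h2 : T.quotKerEquivRange.symm ⟨T x, LinearMap.mem_range_self T x⟩
        = Submodule.Quotient.mk x := by
      rw [← h1, LinearEquiv.symm_apply_apply]
    have := congrArg (fun f : (LinearMap.range T) →ₗ[ZMod 2] ZMod 2 =>
      f ⟨T x, LinearMap.mem_range_self T x⟩) hL
    simp only [LinearMap.comp_apply, Submodule.coe_subtype] at this
    rw [this]
    simp only [LinearMap.comp_apply, LinearEquiv.coe_coe]
    rw [h2, Submodule.liftQ_apply]
  have hL1 : ∀ i, L (vf (n i)) = 1 := by
    intro i
    have hx : T (Pi.single i 1) = vf (n i) := by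
      rw [hT, Finset.sum_eq_single i]
      · simp
      · intro b _ hbi
        rw [Pi.single_apply, if_neg hbi, zero_smul]
      · intro h; exact absurd (Finset.mem_univ i) h
    have hs : σ (Pi.single i 1) = 1 := by
      rw [hσ]
      simp [Finset.sum_pi_single']
    rw [← hx, hLT, hs]
  -- prime data
  set D : ℕ := 3 * ∏ i, (q i).natAbs with hD
  have hD0 : D ≠ 0 := by
    refine mul_ne_zero (by norm_num) (Finset.prod_ne_zero_iff.2 fun j _ => ?_)
    simpa using hq j
  set P : Finset ℕ := D.primeFactors.erase 2 with hPdef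
  have hP : ∀ ℓ ∈ P, ℓ.Prime ∧ ℓ ≠ 2 := by
    intro ℓ hℓ
    rw [hPdef, Finset.mem_erase] at hℓ
    exact ⟨Nat.prime_of_mem_primeFactors hℓ.2, hℓ.1⟩
  -- target signs
  set ε₁ : ℤ := sgn (L (1, 0)) with hε₁
  set ε₂ : ℤ := sgn (L (0, Finsupp.single 2 1)) with hε₂
  set t : ℕ → ℤ := fun ℓ => sgn (L (0, Finsupp.single ℓ 1)) with ht
  set a₈ : ℕ := if ε₁ = 1 then (if ε₂ = 1 then 1 else 5) else (if ε₂ = 1 then 7 else 3)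
    with ha₈
  have ha₈odd : a₈ % 2 = 1 := by
    rw [ha₈]; split <;> split <;> rfl
  have hχ₄ : ZMod.χ₄ ((a₈ : ZMod 4)) = ε₁ := by
    rcases sgn_cases (L (1, 0)) with h1 | h1 <;>
      rcases sgn_cases (L (0, Finsupp.single 2 1)) with h2 | h2 <;>
      rw [ha₈] <;> rw [← hε₁] at h1 <;> rw [← hε₂] at h2 <;>
      simp only [h1, h2] <;> norm_num <;> decide
  have hχ₈ : ZMod.χ₈ ((a₈ : ZMod 8)) = ε₂ := by
    rcases sgn_cases (L (1, 0)) with h1 | h1 <;>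
      rcases sgn_cases (L (0, Finsupp.single 2 1)) with h2 | h2 <;>
      rw [ha₈] <;> rw [← hε₁] at h1 <;> rw [← hε₂] at h2 <;>
      simp only [h1, h2] <;> norm_num <;> decide
  -- reciprocity sign
  set s : ℕ → ℤ := fun ℓ => if a₈ % 4 = 1 then 1 else (-1) ^ (ℓ / 2) with hs
  have hs2 : ∀ ℓ, s ℓ * s ℓ = 1 := by
    intro ℓ
    rw [hs]
    split
    · norm_num
    · rw [← pow_add]
      exact Even.neg_one_pow ⟨ℓ / 2, rfl⟩
  set u : ℕ → ℤ := fun ℓ => s ℓ * t ℓ with hu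
  -- choose the residues b ℓ
  have hbex : ∀ ℓ ∈ P, ∃ b : ℕ, ∀ hℓ : ℓ.Prime,
      ¬ ℓ ∣ b ∧ (@legendreSym ℓ ⟨hℓ⟩ (b : ℤ)) = u ℓ := by
    intro ℓ hℓP
    have hprime := (hP ℓ hℓP).1
    have hne2 := (hP ℓ hℓP).2
    haveI := Fact.mk hprime
    have hsval : s ℓ = 1 ∨ s ℓ = -1 := by
      rw [hs]
      split
      · left; rfl
      · rcases Nat.even_or_odd (ℓ / 2) with h | h
        · left; exact h.neg_one_pow
        · right; exact h.neg_one_pow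
    have huval : u ℓ = 1 ∨ u ℓ = -1 := by
      rw [hu]
      rcases hsval with h | h <;> rcases sgn_cases (L (0, Finsupp.single ℓ 1)) with h' | h' <;>
        rw [ht] <;> simp only [h, h'] <;> norm_num
    rcases huval with h | h
    · refine ⟨1, fun hℓ' => ⟨by simpa using hprime.one_lt.ne', ?_⟩⟩
      rw [h]
      show quadraticChar (ZMod ℓ) (((1 : ℕ) : ℤ) : ZMod ℓ) = 1
      norm_num
    · have hchar : ringChar (ZMod ℓ) ≠ 2 := by
        rw [ZMod.ringChar_zmod_n]; exact hne2
      obtain ⟨x, hx⟩ := quadraticChar_exists_neg_one hchar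
      have hx0 : x ≠ 0 := by
        intro h0
        rw [h0, quadraticChar_zero] at hx
        norm_num at hx
      refine ⟨x.val, fun hℓ' => ⟨?_, ?_⟩⟩
      · intro hdvd
        apply hx0
        have : ((x.val : ℕ) : ZMod ℓ) = 0 := (ZMod.natCast_eq_zero_iff _ _).2 hdvd
        rwa [ZMod.natCast_rightInverse x] at this
      · rw [h]
        show quadraticChar (ZMod ℓ) (((x.val : ℕ) : ℤ) : ZMod ℓ) = -1
        rw [Int.cast_natCast, ZMod.natCast_rightInverse x]
        exact hx
  choose! b hb using hbex
  obtain ⟨a, ha8, haP⟩ := crt a₈ P hP b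
  -- the modulus
  set M : ℕ := 8 * ∏ ℓ ∈ P, ℓ with hM
  have hM0 : M ≠ 0 := by
    refine mul_ne_zero (by norm_num) (Finset.prod_ne_zero_iff.2 fun ℓ hℓ => ?_)
    exact (hP ℓ hℓ).1.pos.ne'
  haveI : NeZero M := ⟨hM0⟩
  have hunit : IsUnit (a : ZMod M) := by
    rw [ZMod.isUnit_iff_coprime]
    refine Nat.Coprime.mul_right ?_ ?_
    · have haodd : a % 2 = 1 := by
        have h2 := ha8.of_dvd (by norm_num : (2 : ℕ) ∣ 8)
        unfold Nat.ModEq at h2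
        omega
      have h2 : a.Coprime 2 := by
        rw [Nat.coprime_two_right, Nat.odd_iff]
        exact haodd
      have := h2.pow_right 3
      norm_num at this
      exact this
    · refine Nat.Coprime.prod_right fun ℓ hℓ => ?_
      have hprime := (hP ℓ hℓ).1
      rw [Nat.coprime_comm, hprime.coprime_iff_not_dvd]
      intro hdvd
      have h0 : a ≡ 0 [MOD ℓ] := (Nat.modEq_zero_iff_dvd).2 hdvd
      have := ((haP ℓ hℓ).symm.trans h0)
      exact (hb ℓ hℓ hprime).1 ((Nat.modEq_zero_iff_dvd).1 this)
  -- Dirichlet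
  obtain ⟨p, hpN, hpprime, hpa⟩ := Nat.forall_exists_prime_gt_and_eq_mod hunit N
  haveI hfact : Fact p.Prime := ⟨hpprime⟩
  have hpm : p ≡ a [MOD M] := (ZMod.natCast_eq_natCast_iff _ _ _).1 hpa
  have hp8 : p ≡ a₈ [MOD 8] := (hpm.of_dvd ⟨∏ ℓ ∈ P, ℓ, rfl⟩).trans ha8
  have hpodd : p % 2 = 1 := by
    have h2 := hp8.of_dvd (by norm_num : (2 : ℕ) ∣ 8)
    unfold Nat.ModEq at h2
    omega
  have hp2 : p ≠ 2 := by
    intro h; rw [h] at hpodd; norm_num at hpodd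
  have hpl : ∀ ℓ ∈ P, p ≡ b ℓ [MOD ℓ] := by
    intro ℓ hℓ
    have hdvd : ℓ ∣ M := Dvd.dvd.mul_left (Finset.dvd_prod_of_mem _ hℓ) 8
    exact (hpm.of_dvd hdvd).trans (haP ℓ hℓ)
  -- the three key legendre symbol computations
  have key1 : legendreSym p (-1) = ε₁ := by
    rw [legendreSym.at_neg_one hp2, ← hχ₄]
    congr 1
    rw [ZMod.natCast_eq_natCast_iff]
    exact hp8.of_dvd (by norm_num : (4 : ℕ) ∣ 8)
  have key2 : legendreSym p 2 = ε₂ := by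
    rw [legendreSym.at_two hp2, ← hχ₈]
    congr 1
    rw [ZMod.natCast_eq_natCast_iff]
    exact hp8
  have hp4 : p % 4 = a₈ % 4 := hp8.of_dvd (by norm_num : (4 : ℕ) ∣ 8)
  have key3 : ∀ ℓ ∈ P, legendreSym p (ℓ : ℤ) = t ℓ := by
    intro ℓ hℓ
    have hprime := (hP ℓ hℓ).1
    have hne2 := (hP ℓ hℓ).2
    haveI := Fact.mk hprime
    have hbℓ := hb ℓ hℓ hprime
    -- p is not ℓ
    have hpℓ : p ≠ ℓ := by
      intro h
      have : p ≡ b ℓ [MOD ℓ] := hpl ℓ hℓ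
      rw [h] at this
      have h0 : (0 : ℕ) ≡ b ℓ [MOD ℓ] := (Nat.modEq_zero_iff_dvd.2 dvd_rfl).symm.trans this
      exact hbℓ.1 (Nat.modEq_zero_iff_dvd.1 h0.symm)
    have hrec := legendreSym.quadratic_reciprocity' (p := ℓ) (q := p) hne2 hp2
    -- legendreSym ℓ p = u ℓ
    have hLp : legendreSym ℓ (p : ℤ) = u ℓ := by
      have hcast : ((p : ℤ) : ZMod ℓ) = ((b ℓ : ℤ) : ZMod ℓ) := by
        push_cast
        rw [ZMod.natCast_eq_natCast_iff]
        exact hpl ℓ hℓ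
      show quadraticChar (ZMod ℓ) ((p : ℤ) : ZMod ℓ) = u ℓ
      rw [hcast]
      exact hbℓ.2
    -- the reciprocity sign
    have hsgn : ((-1 : ℤ)) ^ (ℓ / 2 * (p / 2)) = s ℓ := by
      simp only [hs]
      by_cases h4 : a₈ % 4 = 1
      · rw [if_pos h4]
        have hpdiv : Even (p / 2) := by
          rw [Nat.even_iff, ← Nat.mod_mul_right_div_self]
          omega
        exact Even.neg_one_pow (hpdiv.mul_left _)
      · rw [if_neg h4]
        have h43 : a₈ % 4 = 3 := by omega
        have hpdiv : Odd (p / 2) := by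
          rw [Nat.odd_iff, ← Nat.mod_mul_right_div_self]
          omega
        rw [pow_mul]
        rcases Nat.even_or_odd (ℓ / 2) with h | h
        · rw [h.neg_one_pow, one_pow]
        · rw [h.neg_one_pow]
          exact hpdiv.neg_one_pow
    rw [hrec, hsgn, hLp, hu]
    calc s ℓ * (s ℓ * t ℓ) = (s ℓ * s ℓ) * t ℓ := by ring
      _ = t ℓ := by rw [hs2 ℓ, one_mul]
  -- evaluate all symbols
  have heval : ∀ i, legendreSym p (n i) = -1 := by
    intro i
    have hfac : ∀ ℓ ∈ (n i).natAbs.primeFactors, ℓ = 2 ∨ ℓ ∈ P := by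
      intro ℓ hℓmem
      have hℓp : ℓ.Prime := Nat.prime_of_mem_primeFactors hℓmem
      have hdvd : ℓ ∣ (n i).natAbs := Nat.dvd_of_mem_primeFactors hℓmem
      have hDdvd : (n i).natAbs ∣ D := by
        rw [hD]
        refine Fin.cases ?_ ?_ i
        · simp [hn]
        · intro j
          simp only [hn, Fin.cons_succ]
          exact Dvd.dvd.mul_left (Finset.dvd_prod_of_mem _ (Finset.mem_univ j)) 3
      by_cases h2 : ℓ = 2
      · exact Or.inl h2
      · refine Or.inr ?_
        rw [hPdef, Finset.mem_erase]
        exact ⟨h2, Nat.mem_primeFactors.2 ⟨hℓp, hdvd.trans hDdvd, hD0⟩⟩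
    rw [eval_legendre p L P key1 key2 key3 (n i) (hn0 i) hfac, hL1 i]
    rfl
  refine ⟨p, hpN, hfact, ?_, fun i => ?_⟩
  · have := heval 0
    rwa [hn, Fin.cons_zero] at this
  · have := heval i.succ
    rwa [hn, Fin.cons_succ] at this
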